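/- Let X = {x_1, ..., x_n} be a generic point cloud of pairwise distinct points lying in a linear subspace W of ℝ^N. Then there exists r_0 > 0 such that for every r with 0 < r < r_0 and every orthogonal r-perturbation X_r^⊥ of X (with respect to W), the discrete Gromov–Hausdorff distance satisfies the strict inequality d_J(X, X_r^⊥) < r. -/

import Mathlib

/-- The π-distortion between two indexed point clouds in `ℝ^N`. -/
noncomputable def pertDist {N n : ℕ} (x y : Fin n → EuclideanSpace ℝ (Fin N))
    (π : Equiv.Perm (Fin n)) : ℝ :=
  (1 / 2) * ⨆ p : Fin n × Fin n,
    |dist (x p.1) (x p.2) - dist (y (π p.1)) (y (π p.2))|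

/-- The discrete Gromov–Hausdorff distance between two indexed point clouds. -/
noncomputable def dJ {N n : ℕ} (x y : Fin n → EuclideanSpace ℝ (Fin N)) : ℝ :=
  ⨅ π : Equiv.Perm (Fin n), pertDist x y π

/-- A point cloud is generic if not all pairwise distances are equal. -/
def Generic {N n : ℕ} (x : Fin n → EuclideanSpace ℝ (Fin N)) : Prop :=
  ∃ i₁ i₂ i₃ i₄ : Fin n, i₁ ≠ i₂ ∧ i₃ ≠ i₄ ∧ dist (x i₁) (x i₂) ≠ dist (x i₃) (x i₄)

theorem stmt_6 {N n : ℕ} (W : Submodule ℝ (EuclideanSpace ℝ (Fin N)))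
    (x : Fin n → EuclideanSpace ℝ (Fin N))
    (hxW : ∀ i, x i ∈ W) (hinj : Function.Injective x)
    (hgen : Generic x) :
    ∃ r₀ > 0, ∀ r : ℝ, 0 < r → r < r₀ →
      ∀ xperp : Fin n → EuclideanSpace ℝ (Fin N),
        (∀ i, dist (x i) (xperp i) = r) →
        (∀ i, xperp i - x i ∈ Wᗮ) →
        dJ x xperp < r := by
  classical
  obtain ⟨i₁, i₂, i₃, i₄, h12, h34, hne⟩ := hgen
  set S : Finset (Fin n × Fin n) := Finset.univ.filter (fun p => p.1 ≠ p.2) with hS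
  have hSne : S.Nonempty := ⟨(i₁, i₂), by simp [hS, h12]⟩
  obtain ⟨p0, hp0S, hp0min⟩ := S.exists_min_image (fun p => dist (x p.1) (x p.2)) hSne
  set r₀ : ℝ := dist (x p0.1) (x p0.2) with hr₀
  have hr₀pos : 0 < r₀ := by
    have : p0.1 ≠ p0.2 := by simpa [hS] using hp0S
    exact dist_pos.mpr (fun h => this (hinj h))
  have hr₀le : ∀ i j : Fin n, i ≠ j → r₀ ≤ dist (x i) (x j) := by
    intro i j h
    have hmem : (i, j) ∈ S := by rw [hS]; simp [h]
    exact hp0min (i, j) hmem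
  refine ⟨r₀, hr₀pos, ?_⟩
  intro r hr hrr₀ xperp hd hperp
  have key : ∀ p : Fin n × Fin n,
      |dist (x p.1) (x p.2) - dist (xperp p.1) (xperp p.2)| ≤ 2 * r ^ 2 / r₀ := by
    rintro ⟨i, j⟩
    simp only
    by_cases hij : i = j
    · subst hij
      simp only [dist_self, sub_zero, abs_zero]
      positivity
    · set d := dist (x i) (x j) with hdij
      set d' := dist (xperp i) (xperp j) with hd'
      set b := (xperp i - x i) - (xperp j - x j) with hb
      have hsq : d' ^ 2 = d ^ 2 + ‖b‖ ^ 2 := by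
        have ha : x i - x j ∈ W := sub_mem (hxW i) (hxW j)
        have hbW : b ∈ Wᗮ := sub_mem (hperp i) (hperp j)
        have hinner : inner ℝ (x i - x j) b = (0 : ℝ) :=
          Submodule.inner_right_of_mem_orthogonal ha hbW
        have hdecomp : xperp i - xperp j = (x i - x j) + b := by
          rw [hb]; abel
        calc d' ^ 2 = ‖xperp i - xperp j‖ ^ 2 := by rw [hd', dist_eq_norm]
          _ = ‖(x i - x j) + b‖ ^ 2 := by rw [hdecomp]
          _ = ‖x i - x j‖ ^ 2 + 2 * inner ℝ (x i - x j) b + ‖b‖ ^ 2 := by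
              rw [norm_add_sq_real]
          _ = d ^ 2 + ‖b‖ ^ 2 := by rw [hinner, hdij, dist_eq_norm]; ring
      have hbnorm : ‖b‖ ≤ 2 * r := by
        calc ‖b‖ ≤ ‖xperp i - x i‖ + ‖xperp j - x j‖ := norm_sub_le _ _
          _ = dist (x i) (xperp i) + dist (x j) (xperp j) := by
              rw [dist_eq_norm, dist_eq_norm, norm_sub_rev (x i), norm_sub_rev (x j)]
          _ = 2 * r := by rw [hd i, hd j]; ring
      have hdl : r₀ ≤ d := hr₀le _ _ hij
      have hd'0 : 0 ≤ d' := dist_nonneg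
      have hb0 : (0:ℝ) ≤ ‖b‖ := norm_nonneg _
      have hdd' : d ≤ d' := by nlinarith
      rw [abs_sub_comm, abs_of_nonneg (by linarith), le_div_iff₀ hr₀pos]
      nlinarith [mul_le_mul hbnorm hbnorm hb0 (by linarith : (0:ℝ) ≤ 2*r),
        mul_le_mul_of_nonneg_left (by linarith : 2 * r₀ ≤ d' + d)
          (sub_nonneg.mpr hdd')]
  have hne' : Nonempty (Fin n × Fin n) := ⟨(i₁, i₂)⟩
  have hpert : pertDist x xperp 1 ≤ r ^ 2 / r₀ := by
    rw [pertDist]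
    have hsup : (⨆ p : Fin n × Fin n,
        |dist (x p.1) (x p.2) - dist (xperp ((1 : Equiv.Perm (Fin n)) p.1))
          (xperp ((1 : Equiv.Perm (Fin n)) p.2))|) ≤ 2 * r ^ 2 / r₀ := by
      apply ciSup_le
      intro p
      simpa using key p
    calc (1/2 : ℝ) * _ ≤ (1/2) * (2 * r ^ 2 / r₀) := by linarith
      _ = r ^ 2 / r₀ := by ring
  have hdJ : dJ x xperp ≤ pertDist x xperp 1 :=
    ciInf_le (Finite.bddBelow_range _) 1
  have : r ^ 2 / r₀ < r := by
    rw [div_lt_iff₀ hr₀pos]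
    nlinarith
  linarith
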